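/- The set of all single-peaked linear orders on {1,...,n} with respect to the axis 1 < 2 < ... < n is a Condorcet domain: every profile with an odd number of voters whose preferences are single-peaked has a transitive majority relation. -/

import Mathlib

/-- The majority relation of a profile `P` of `k` voters: `a` beats `b` if more voters
rank `a` above `b` than rank `b` above `a`. -/
def Maj {α : Type*} {k : ℕ} (P : Fin k → α → α → Prop) (a b : α) : Prop :=
  Nat.card {i : Fin k // P i a b} > Nat.card {i : Fin k // P i b a}

/-- `D` is a Condorcet domain: a set of linear orders (strict total orders) on the
alternatives such that every profile with an odd number of voters drawn from `D`
has a transitive majority relation. -/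
def IsCondorcetDomain {α : Type*} (D : Set (α → α → Prop)) : Prop :=
  (∀ r ∈ D, IsStrictTotalOrder α r) ∧
  ∀ (k : ℕ), Odd k → ∀ P : Fin k → α → α → Prop,
    (∀ i, P i ∈ D) → Transitive (Maj P)

/-- A linear order on `Fin n` is single-peaked with respect to the axis
`0 < 1 < ⋯ < n-1` if there is a peak `p` such that among alternatives on the same
side of `p`, the one closer to `p` is preferred. -/
def SinglePeaked {n : ℕ} (r : Fin n → Fin n → Prop) : Prop :=
  IsStrictTotalOrder (Fin n) r ∧
  ∃ p : Fin n, (∀ i j : Fin n, i < j → j ≤ p → r j i) ∧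
    (∀ i j : Fin n, p ≤ i → i < j → r i j)

section aux
variable {α : Type*}

lemma card_pair_sum {k : ℕ} (p : Fin k → Prop) :
    Nat.card {i // p i} + Nat.card {i // ¬ p i} = k := by
  classical
  simp only [Nat.card_eq_fintype_card, Fintype.card_subtype]
  rw [Finset.card_filter_add_card_filter_not (p := p)]
  simp

lemma card_le_of_imp {k : ℕ} {p q : Fin k → Prop} (h : ∀ i, p i → q i) :
    Nat.card {i // p i} ≤ Nat.card {i // q i} :=
  Nat.card_le_card_of_injective (fun x => ⟨x.1, h _ x.2⟩)
    (fun a b hab => by cases a; cases b; simpa using hab)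

lemma card_congr_iff {k : ℕ} {p q : Fin k → Prop} (h : ∀ i, p i ↔ q i) :
    Nat.card {i // p i} = Nat.card {i // q i} :=
  Nat.card_congr (Equiv.subtypeEquivRight h)

lemma card_not_rel {k : ℕ} {P : Fin k → α → α → Prop}
    (hP : ∀ i, IsStrictTotalOrder α (P i)) {a b : α} (hab : a ≠ b) :
    Nat.card {i // ¬ P i a b} = Nat.card {i // P i b a} := by
  apply card_congr_iff
  intro i
  constructor
  · intro h
    rcases (haveI := hP i; trichotomous (r := P i) a b) with h' | h' | h'
    · exact absurd h' h
    · exact absurd h' hab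
    · exact h'
  · intro h h'
    exact (hP i).irrefl a ((hP i).trans _ _ _ h' h)

lemma sen {k : ℕ} (P : Fin k → α → α → Prop)
    (hP : ∀ i, IsStrictTotalOrder α (P i))
    (x y z : α) (hxy : x ≠ y) (hzx : z ≠ x)
    (hres : ∀ i, ¬ (P i x y ∧ P i z y)) :
    ¬ (Maj P x y ∧ Maj P y z ∧ Maj P z x) := by
  rintro ⟨h1, _, h3⟩
  have key : ∀ i, P i z x → P i y x := by
    intro i hzxi
    rcases (haveI := hP i; trichotomous (r := P i) x y) with h | h | h
    · exact absurd ⟨h, (hP i).trans _ _ _ hzxi h⟩ (hres i)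
    · exact absurd h hxy
    · exact h
  have hle := card_le_of_imp key
  have e1 := card_pair_sum (fun i => P i x y)
  have e2 := card_pair_sum (fun i => P i z x)
  rw [card_not_rel hP hxy] at e1
  rw [card_not_rel hP hzx] at e2
  have h1' : Nat.card {i // P i x y} > Nat.card {i // P i y x} := h1
  have h3' : Nat.card {i // P i z x} > Nat.card {i // P i x z} := h3
  omega

lemma median_not_last {n k : ℕ} {P : Fin k → Fin n → Fin n → Prop}
    (hP : ∀ i, SinglePeaked (P i)) {u v w : Fin n} (huv : u < v) (hvw : v < w) :
    ∀ i, ¬ (P i u v ∧ P i w v) := by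
  rintro i ⟨h1, h2⟩
  obtain ⟨hsto, p, hleft, hright⟩ := hP i
  rcases le_total v p with h | h
  · exact hsto.irrefl u (hsto.trans _ _ _ h1 (hleft u v huv h))
  · exact hsto.irrefl v (hsto.trans _ _ _ (hright v w h hvw) h2)

end aux

/-- Black's theorem (transitivity part): the set of all single-peaked linear orders with
respect to the natural axis is a Condorcet domain. -/
theorem singlePeaked_isCondorcetDomain (n : ℕ) :
    IsCondorcetDomain {r : Fin n → Fin n → Prop | SinglePeaked r} := by
  constructor
  · intro r hr
    exact hr.1
  · intro k hk P hP a b c hab hbc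
    have hsto : ∀ i, IsStrictTotalOrder (Fin n) (P i) := fun i => (hP i).1
    have hne : ∀ x y : Fin n, Maj P x y → x ≠ y := by
      rintro x y h rfl
      exact lt_irrefl _ h
    have hab' : a ≠ b := hne _ _ hab
    have hbc' : b ≠ c := hne _ _ hbc
    have hac' : a ≠ c := by
      rintro rfl
      exact lt_asymm hab hbc
    by_contra hnac
    -- majority is total on distinct alternatives for odd profiles
    have hca : Maj P c a := by
      obtain ⟨m, hm⟩ := hk
      have e := card_pair_sum (fun i => P i a c)
      rw [card_not_rel hsto hac'] at e
      have hodd : Nat.card {i // P i a c} ≠ Nat.card {i // P i c a} := by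
        intro h
        rw [h] at e
        omega
      have := not_lt.mp hnac
      exact lt_of_le_of_ne this hodd
    -- now a → b → c → a is a majority cycle; find the median and contradict Sen
    rcases lt_trichotomy a b with h1 | h1 | h1
    · rcases lt_trichotomy b c with h2 | h2 | h2
      · -- a < b < c : median b
        exact sen P hsto a b c hab' (Ne.symm hac')
          (median_not_last hP h1 h2) ⟨hab, hbc, hca⟩
      · exact absurd h2 hbc'
      · rcases lt_trichotomy a c with h3 | h3 | h3
        · -- a < c < b : median c
          exact sen P hsto b c a hbc' hab'
            (fun i => fun h => median_not_last hP h3 h2 i ⟨h.2, h.1⟩) ⟨hbc, hca, hab⟩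
        · exact absurd h3 hac'
        · -- c < a < b : median a
          exact sen P hsto c a b (Ne.symm hac') hbc'
            (median_not_last hP h3 h1) ⟨hca, hab, hbc⟩
    · exact absurd h1 hab'
    · rcases lt_trichotomy b c with h2 | h2 | h2
      · rcases lt_trichotomy a c with h3 | h3 | h3
        · -- b < a < c : median a
          exact sen P hsto c a b (Ne.symm hac') hbc'
            (fun i => fun h => median_not_last hP h1 h3 i ⟨h.2, h.1⟩) ⟨hca, hab, hbc⟩
        · exact absurd h3 hac'
        · -- b < c < a : median c
          exact sen P hsto b c a hbc' hab'
            (median_not_last hP h2 h3) ⟨hbc, hca, hab⟩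
      · exact absurd h2 hbc'
      · -- c < b < a : median b
        exact sen P hsto a b c hab' (Ne.symm hac')
          (fun i => fun h => median_not_last hP h2 h1 i ⟨h.2, h.1⟩) ⟨hab, hbc, hca⟩
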